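/- Let z be a feasible solution to a star instance with uniform capacities u (constraints: ∑_i u·z_i ≥ w, ∑_i (f_i + d(i,j)·u)·z_i ≤ b, 0 ≤ z_i ≤ 1). Then there exists a feasible solution z' with ∑_i z'_i = ∑_i z_i such that at most one coordinate of z' is strictly between 0 and 1. -/

import Mathlib

private lemma uniform_star_aux {n : ℕ} (u w b : ℝ) (f dj : Fin n → ℝ)
    (hu : 0 < u) :
    ∀ N : ℕ, ∀ z : Fin n → ℝ,
      (∑ i, u * z i ≥ w) → (∑ i, (f i + dj i * u) * z i ≤ b) →
      (∀ i, 0 ≤ z i ∧ z i ≤ 1) →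
      Set.ncard {i : Fin n | 0 < z i ∧ z i < 1} ≤ N →
      ∃ z' : Fin n → ℝ, ((∑ i, u * z' i ≥ w) ∧ (∑ i, (f i + dj i * u) * z' i ≤ b) ∧
        (∀ i, 0 ≤ z' i ∧ z' i ≤ 1)) ∧ (∑ i, z' i = ∑ i, z i) ∧
        Set.ncard {i : Fin n | 0 < z' i ∧ z' i < 1} ≤ 1 := by
  intro N
  induction N with
  | zero =>
    intro z h1 h2 h3 h4
    exact ⟨z, ⟨h1, h2, h3⟩, rfl, h4.trans (by norm_num)⟩
  | succ N ih =>
    intro z h1 h2 h3 h4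
    by_cases hle : Set.ncard {i : Fin n | 0 < z i ∧ z i < 1} ≤ 1
    · exact ⟨z, ⟨h1, h2, h3⟩, rfl, hle⟩
    push_neg at hle
    obtain ⟨a, a', ha, ha', haa⟩ := (Set.one_lt_ncard_iff (Set.toFinite _)).1 hle
    set c := fun k => f k + dj k * u with hc
    obtain ⟨i, j, hij, hi, hj, hcij⟩ :
        ∃ i j : Fin n, i ≠ j ∧ (0 < z i ∧ z i < 1) ∧ (0 < z j ∧ z j < 1) ∧ c i ≤ c j := by
      rcases le_total (c a) (c a') with h | h
      · exact ⟨a, a', haa, ha, ha', h⟩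
      · exact ⟨a', a, haa.symm, ha', ha, h⟩
    set δ := min (1 - z i) (z j) with hδ
    have hδpos : 0 < δ := lt_min (by linarith [hi.2]) hj.1
    have hδi : δ ≤ 1 - z i := min_le_left _ _
    have hδj : δ ≤ z j := min_le_right _ _
    set g := fun k => z k + (if k = i then δ else 0) - (if k = j then δ else 0) with hg
    have hgi : g i = z i + δ := by simp [hg, hij]
    have hgj : g j = z j - δ := by simp [hg, hij.symm]
    have hgk : ∀ k, k ≠ i → k ≠ j → g k = z k := by
      intro k hki hkj; simp [hg, hki, hkj]
    have hgsum : ∀ a : Fin n → ℝ, ∑ k, a k * g k = ∑ k, a k * z k + δ * a i - δ * a j := by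
      intro a
      simp only [hg, mul_sub, mul_add, mul_ite, mul_zero]
      rw [Finset.sum_sub_distrib, Finset.sum_add_distrib]
      simp [Finset.sum_ite_eq']
      ring
    have hsum : ∑ k, g k = ∑ k, z k := by
      have := hgsum (fun _ => 1)
      simpa using this
    have hbox : ∀ k, 0 ≤ g k ∧ g k ≤ 1 := by
      intro k
      by_cases hki : k = i
      · subst hki; rw [hgi]; constructor <;> linarith [hi.1]
      by_cases hkj : k = j
      · subst hkj; rw [hgj]; constructor <;> linarith [hj.2]
      · rw [hgk k hki hkj]; exact h3 k
    have hcap : ∑ k, u * g k ≥ w := by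
      have := hgsum (fun _ => u)
      linarith
    have hcost : ∑ k, (f k + dj k * u) * g k ≤ b := by
      have h := hgsum c
      have h2' : δ * c i - δ * c j ≤ 0 := by nlinarith
      simp only [hc] at h h2'
      linarith
    have hsubset : {k : Fin n | 0 < g k ∧ g k < 1} ⊂ {k : Fin n | 0 < z k ∧ z k < 1} := by
      constructor
      · intro k hk
        by_cases hki : k = i
        · subst hki; exact hi
        by_cases hkj : k = j
        · subst hkj; exact hj
        · rw [Set.mem_setOf_eq, hgk k hki hkj] at hk; exact hk
      · intro hsup
        rcases min_cases (1 - z i) (z j) with ⟨he, _⟩ | ⟨he, _⟩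
        · have : i ∈ {k : Fin n | 0 < g k ∧ g k < 1} := hsup hi
          rw [Set.mem_setOf_eq, hgi] at this
          rw [hδ] at *
          linarith [this.2]
        · have : j ∈ {k : Fin n | 0 < g k ∧ g k < 1} := hsup hj
          rw [Set.mem_setOf_eq, hgj] at this
          rw [hδ] at *
          linarith [this.1]
    have hcard : Set.ncard {k : Fin n | 0 < g k ∧ g k < 1} ≤ N := by
      have := Set.ncard_lt_ncard hsubset (Set.toFinite _)
      omega
    obtain ⟨z', hz'feas, hz'sum, hz'card⟩ := ih g hcap hcost hbox hcard
    exact ⟨z', hz'feas, hz'sum.trans hsum, hz'card⟩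

/-- With uniform capacities, any feasible star-instance solution can be made
almost integral (at most one fractional coordinate) preserving the volume. -/
theorem uniform_star_almost_integral
    {n : ℕ} (u w b : ℝ) (f dj : Fin n → ℝ)
    (hu : 0 < u) (hf : ∀ i, 0 ≤ f i) (hdj : ∀ i, 0 ≤ dj i)
    (hw : 0 ≤ w) (hb : 0 ≤ b)
    (z : Fin n → ℝ)
    (hfeas : (∑ i, u * z i ≥ w) ∧ (∑ i, (f i + dj i * u) * z i ≤ b) ∧
      (∀ i, 0 ≤ z i ∧ z i ≤ 1)) :
    ∃ z' : Fin n → ℝ,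
      ((∑ i, u * z' i ≥ w) ∧ (∑ i, (f i + dj i * u) * z' i ≤ b) ∧
        (∀ i, 0 ≤ z' i ∧ z' i ≤ 1)) ∧
      (∑ i, z' i = ∑ i, z i) ∧
      Set.ncard {i : Fin n | 0 < z' i ∧ z' i < 1} ≤ 1 := by
  obtain ⟨h1, h2, h3⟩ := hfeas
  exact uniform_star_aux u w b f dj hu (Set.ncard {i : Fin n | 0 < z i ∧ z i < 1})
    z h1 h2 h3 le_rfl
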